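/- Let 𝔞₁ and 𝔞₂ be ideals of A both containing 𝔦₀. If 𝔞₁⋈^{f,g}(𝔟,𝔠) ⊆ 𝔞₂⋈^{f,g}(𝔟,𝔠), then 𝔞₁ ⊆ 𝔞₂. -/
import Mathlib

/-- If `𝔞₁, 𝔞₂` are ideals of `A` containing `𝔦₀ = f⁻¹ 𝔟 = g⁻¹ 𝔠` and the ideal
`𝔞₁ ⋈^{f,g} (𝔟,𝔠)` is contained in `𝔞₂ ⋈^{f,g} (𝔟,𝔠)`, then `𝔞₁ ⊆ 𝔞₂`. -/
theorem biAmalgamation_ideal_subset {A B C : Type*} [CommRing A] [CommRing B] [CommRing C]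
    (f : A →+* B) (g : A →+* C) (𝔟 : Ideal B) (𝔠 : Ideal C)
    (hcomp : 𝔟.comap f = 𝔠.comap g)
    (𝔞₁ 𝔞₂ : Ideal A) (h₁ : 𝔟.comap f ≤ 𝔞₁) (h₂ : 𝔟.comap f ≤ 𝔞₂)
    (hsub : {x : B × C | ∃ p ∈ 𝔞₁, ∃ β ∈ 𝔟, ∃ γ ∈ 𝔠, x = (f p + β, g p + γ)} ⊆
            {x : B × C | ∃ p ∈ 𝔞₂, ∃ β ∈ 𝔟, ∃ γ ∈ 𝔠, x = (f p + β, g p + γ)}) :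
    𝔞₁ ≤ 𝔞₂ := by
  intro a ha
  have hmem : ((f a, g a) : B × C) ∈
      {x : B × C | ∃ p ∈ 𝔞₁, ∃ β ∈ 𝔟, ∃ γ ∈ 𝔠, x = (f p + β, g p + γ)} :=
    ⟨a, ha, 0, 𝔟.zero_mem, 0, 𝔠.zero_mem, by simp⟩
  obtain ⟨p, hp, β, hβ, γ, hγ, hx⟩ := hsub hmem
  have h1 : f a = f p + β := congrArg Prod.fst hx
  have hfd : f (a - p) ∈ 𝔟 := by
    rw [map_sub]
    have : f a - f p = β := by rw [h1]; ring
    rw [this]; exact hβ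
  have : a - p ∈ 𝔞₂ := h₂ hfd
  have := 𝔞₂.add_mem this hp
  simpa using this
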